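/- Let γ : S¹ → ℝᵈ be a simple closed curve whose i-th coordinate shadow is a simple path λᵢ : [0,1] → {xᵢ = 0}. Then γ splits into two closed arcs Tᵢ and Bᵢ with Tᵢ ∩ Bᵢ = {aᵢ, ãᵢ}, πᵢ(Tᵢ) = πᵢ(Bᵢ) = πᵢ(γ), where πᵢ(aᵢ) and πᵢ(ãᵢ) are the two endpoints of the path. -/

import Mathlib

open Real unitInterval

/-- Orthogonal projection of `ℝᵈ` onto the coordinate hyperplane `{x : xᵢ = 0}`. -/
noncomputable def coordProj {d : ℕ} (i : Fin d) (x : EuclideanSpace ℝ (Fin d)) :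
    EuclideanSpace ℝ (Fin d) :=
  WithLp.toLp 2 (Function.update (WithLp.ofLp x) i 0)

lemma continuous_coordProj {d : ℕ} (i : Fin d) :
    Continuous (coordProj i : EuclideanSpace ℝ (Fin d) → EuclideanSpace ℝ (Fin d)) := by
  have h : (coordProj i : EuclideanSpace ℝ (Fin d) → EuclideanSpace ℝ (Fin d))
      = fun x => x - (EuclideanSpace.proj i x) • EuclideanSpace.single i (1:ℝ) := by
    funext x
    ext j
    rcases eq_or_ne j i with rfl | hne
    · simp [coordProj, PiLp.sub_apply, PiLp.smul_apply, EuclideanSpace.single_apply]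
    · simp [coordProj, Function.update_apply, hne, PiLp.sub_apply, PiLp.smul_apply,
        EuclideanSpace.single_apply]
  rw [h]
  exact continuous_id.sub ((EuclideanSpace.proj i).continuous.smul continuous_const)

lemma exp_toIocMod (hp : 0 < 2 * π) (a b : ℝ) :
    Circle.exp (toIocMod hp a b) = Circle.exp b :=
  Circle.exp_eq_exp.2 ⟨-(toIocDiv hp a b), by
    simp only [toIocMod, zsmul_eq_mul]; push_cast; ring⟩

lemma exp_toIcoMod (hp : 0 < 2 * π) (a b : ℝ) :
    Circle.exp (toIcoMod hp a b) = Circle.exp b :=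
  Circle.exp_eq_exp.2 ⟨-(toIcoDiv hp a b), by
    simp only [toIcoMod, zsmul_eq_mul]; push_cast; ring⟩

/-- If the `i`-th coordinate shadow of a simple closed curve `γ` in `ℝᵈ` is a simple
path `lam`, then the curve splits into two closed arcs `T` and `B` meeting exactly in
two points `a` and `a'`, each arc projecting onto the whole shadow, with `πᵢ a` and
`πᵢ a'` the two endpoints of the path. -/
theorem curve_splits_into_top_and_bottom (d : ℕ) (i : Fin d)
    (γ : Circle → EuclideanSpace ℝ (Fin d)) (hγ : Topology.IsEmbedding γ)
    (lam : I → EuclideanSpace ℝ (Fin d)) (hlam : Topology.IsEmbedding lam)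
    (hrange : Set.range lam = coordProj i '' Set.range γ) :
    ∃ (α β : ℝ) (T B : Set (EuclideanSpace ℝ (Fin d))) (a a' : EuclideanSpace ℝ (Fin d)),
      α < β ∧ β < α + 2 * π ∧
      T = γ '' (Circle.exp '' Set.Icc α β) ∧
      B = γ '' (Circle.exp '' Set.Icc β (α + 2 * π)) ∧
      T ∪ B = Set.range γ ∧
      a ≠ a' ∧ T ∩ B = {a, a'} ∧
      coordProj i '' T = coordProj i '' Set.range γ ∧
      coordProj i '' B = coordProj i '' Set.range γ ∧
      ({coordProj i a, coordProj i a'} : Set (EuclideanSpace ℝ (Fin d)))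
        = {lam 0, lam 1} := by
  classical
  have hp : (0:ℝ) < 2 * π := by positivity
  -- the parametrization of the shadow
  have hmem : ∀ c : Circle, ∃ t : I, lam t = coordProj i (γ c) := by
    intro c
    have h1 : coordProj i (γ c) ∈ coordProj i '' Set.range γ := ⟨γ c, ⟨c, rfl⟩, rfl⟩
    rw [← hrange] at h1
    exact h1
  choose g hg using hmem
  have hgcont : Continuous g := by
    rw [hlam.continuous_iff]
    have h2 : lam ∘ g = fun c => coordProj i (γ c) := funext hg
    rw [h2]
    exact (continuous_coordProj i).comp hγ.continuous
  have hgsurj : ∀ t : I, ∃ c, g c = t := by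
    intro t
    have h3 : lam t ∈ Set.range lam := ⟨t, rfl⟩
    rw [hrange] at h3
    obtain ⟨x, ⟨c, rfl⟩, hx⟩ := h3
    exact ⟨c, hlam.injective (by rw [hg c, hx])⟩
  obtain ⟨c₀, hc₀⟩ := hgsurj 0
  obtain ⟨c₁, hc₁⟩ := hgsurj 1
  have h01 : (0:I) ≠ 1 := fun h => by simpa using congrArg Subtype.val h
  have hc01 : c₀ ≠ c₁ := by rintro rfl; rw [hc₀] at hc₁; exact h01 hc₁
  set α := Complex.arg (c₀ : ℂ) with hαdef
  have hexpα : Circle.exp α = c₀ := Circle.exp_arg c₀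
  set β := toIocMod hp α (Complex.arg (c₁ : ℂ)) with hβdef
  have hexpβ : Circle.exp β = c₁ := by
    rw [hβdef, exp_toIocMod hp]
    exact Circle.exp_arg c₁
  have hβmem : β ∈ Set.Ioc α (α + 2 * π) := toIocMod_mem_Ioc hp α _
  have hβne : β ≠ α + 2 * π := by
    intro h
    have : c₀ = c₁ := by rw [← hexpα, ← hexpβ, h]; exact (Circle.periodic_exp α).symm
    exact hc01 this
  have hαβ : α < β := hβmem.1
  have hβlt : β < α + 2 * π := lt_of_le_of_ne hβmem.2 hβne
  -- the two circle arcs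
  set S₁ := Circle.exp '' Set.Icc α β with hS₁
  set S₂ := Circle.exp '' Set.Icc β (α + 2 * π) with hS₂
  have hSunion : S₁ ∪ S₂ = Set.univ := by
    rw [hS₁, hS₂, ← Set.image_union, Set.Icc_union_Icc_eq_Icc hαβ.le hβlt.le]
    ext z
    simp only [Set.mem_image, Set.mem_univ, iff_true]
    refine ⟨toIcoMod hp α (Complex.arg (z : ℂ)),
      Set.Ico_subset_Icc_self (toIcoMod_mem_Ico hp α _), ?_⟩
    rw [exp_toIcoMod hp]
    exact Circle.exp_arg z
  have hSinter : S₁ ∩ S₂ = {Circle.exp α, Circle.exp β} := by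
    ext z
    simp only [Set.mem_inter_iff, Set.mem_insert_iff, Set.mem_singleton_iff, hS₁, hS₂,
      Set.mem_image]
    constructor
    · rintro ⟨⟨s, hs, rfl⟩, ⟨u, hu, huz⟩⟩
      obtain ⟨m, hm⟩ := Circle.exp_eq_exp.1 huz
      have hm0 : (0:ℤ) ≤ m := by
        have : (0:ℝ) ≤ (m:ℝ) * (2 * π) := by nlinarith [hs.2, hu.1]
        have h2 := le_of_mul_le_mul_right (by linarith : (0:ℝ) * (2 * π) ≤ (m:ℝ) * (2 * π)) hp
        exact_mod_cast h2
      have hm1 : m ≤ 1 := by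
        have h1 : (m:ℝ) * (2 * π) ≤ 1 * (2 * π) := by nlinarith [hs.1, hu.2]
        have := le_of_mul_le_mul_right h1 hp
        exact_mod_cast this
      interval_cases m
      · right
        have : u = s := by rw [hm]; push_cast; ring
        subst this
        have : u = β := le_antisymm hs.2 hu.1
        rw [← this]
      · left
        have hs' : s = α := by
          have : u = s + 2 * π := by rw [hm]; push_cast; ring
          have := hu.2
          nlinarith [hs.1]
        rw [hs']
    · rintro (rfl | rfl)
      · exact ⟨⟨α, ⟨le_refl α, hαβ.le⟩, rfl⟩,
          ⟨α + 2 * π, ⟨hβlt.le, le_refl _⟩, Circle.periodic_exp α⟩⟩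
      · exact ⟨⟨β, ⟨hαβ.le, le_refl β⟩, rfl⟩, ⟨β, ⟨le_refl β, hβlt.le⟩, rfl⟩⟩
  -- the real-valued height function
  set f : ℝ → ℝ := fun θ => ((g (Circle.exp θ) : I) : ℝ) with hfdef
  have hfcont : Continuous f := continuous_subtype_val.comp (hgcont.comp Circle.exp.continuous)
  have hfα : f α = 0 := by rw [hfdef]; simp only [hexpα, hc₀]; rfl
  have hfβ : f β = 1 := by rw [hfdef]; simp only [hexpβ, hc₁]; rfl
  have hfα2 : f (α + 2 * π) = 0 := by
    rw [hfdef]; simp only []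
    rw [Circle.periodic_exp α, hexpα, hc₀]; rfl
  -- projections of the two arcs cover the shadow
  have key : ∀ s : Set ℝ, (∀ t : I, (t : ℝ) ∈ f '' s) →
      coordProj i '' (γ '' (Circle.exp '' s)) = coordProj i '' Set.range γ := by
    intro s hs
    apply Set.Subset.antisymm
    · exact Set.image_mono (Set.image_subset_range γ _)
    · rw [← hrange]
      rintro _ ⟨t, rfl⟩
      obtain ⟨θ, hθ, hθt⟩ := hs t
      have hgt : g (Circle.exp θ) = t := Subtype.ext hθt
      exact ⟨γ (Circle.exp θ), ⟨Circle.exp θ, ⟨θ, hθ, rfl⟩, rfl⟩,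
        by rw [← hg, hgt]⟩
  have hT : coordProj i '' (γ '' S₁) = coordProj i '' Set.range γ := by
    apply key
    intro t
    apply intermediate_value_Icc hαβ.le hfcont.continuousOn
    rw [hfα, hfβ]
    exact ⟨t.2.1, t.2.2⟩
  have hB : coordProj i '' (γ '' S₂) = coordProj i '' Set.range γ := by
    apply key
    intro t
    apply intermediate_value_Icc' hβlt.le hfcont.continuousOn
    rw [hfα2, hfβ]
    exact ⟨t.2.1, t.2.2⟩
  -- endpoints
  have hpa : coordProj i (γ (Circle.exp α)) = lam 0 := by
    rw [← hg, hexpα, hc₀]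
  have hpa' : coordProj i (γ (Circle.exp β)) = lam 1 := by
    rw [← hg, hexpβ, hc₁]
  have hne : γ (Circle.exp α) ≠ γ (Circle.exp β) := by
    intro h
    apply h01
    apply hlam.injective
    rw [← hpa, ← hpa', h]
  refine ⟨α, β, γ '' S₁, γ '' S₂, γ (Circle.exp α), γ (Circle.exp β),
    hαβ, hβlt, rfl, rfl, ?_, hne, ?_, hT, hB, ?_⟩
  · rw [← Set.image_union, hSunion, Set.image_univ]
  · rw [← Set.image_inter hγ.injective, hSinter, Set.image_pair]
  · rw [hpa, hpa']
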